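/- Let Σ be a compact subset of ℝ and let μ be a Borel probability measure with support contained in Σ. Suppose P₁, P₂, … is an infinite sequence of distinct irreducible monic integer polynomials such that the support of the counting measure μ_{P_k} is contained in Σ for every k and the sequence μ_{P₁}, μ_{P₂}, … weak-* converges to μ. Then ∫_Σ log|Q(x)| dμ(x) ≥ 0 for every nonzero integer polynomial Q. -/

import Mathlib

open MeasureTheory Polynomial Filter
open scoped ENNReal NNReal

/-- The logarithmic potential `U^μ(x) = ∫ -log|x - t| dμ(t)` of a measure on `ℝ`. -/
noncomputable def potential (μ : Measure ℝ) (x : ℝ) : ℝ := ∫ t, -Real.log |x - t| ∂μ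

/-- The positive part of the energy integral `I(μ) = ∫∫ -log|x-y| dμ dμ`
(with value `∞` on the diagonal, where `-log 0 = ∞`). -/
noncomputable def energyPos (μ : Measure ℝ) : ℝ≥0∞ :=
  ∫⁻ p : ℝ × ℝ, (if p.1 = p.2 then ⊤ else ENNReal.ofReal (-Real.log |p.1 - p.2|)) ∂(μ.prod μ)

/-- The negative part of the energy integral `I(μ) = ∫∫ -log|x-y| dμ dμ`. -/
noncomputable def energyNeg (μ : Measure ℝ) : ℝ≥0∞ :=
  ∫⁻ p : ℝ × ℝ, ENNReal.ofReal (Real.log |p.1 - p.2|) ∂(μ.prod μ)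

/-- The energy `I(μ)`, as a real number (junk value when the energy is infinite). -/
noncomputable def energyR (μ : Measure ℝ) : ℝ := (energyPos μ).toReal - (energyNeg μ).toReal

/-- The logarithmic capacity of a set of reals: `sup e^{-I(μ)}` over Borel probability
measures supported in `S`. -/
noncomputable def capacity (S : Set ℝ) : ℝ :=
  ⨆ μ : {μ : Measure ℝ // IsProbabilityMeasure μ ∧ μ Sᶜ = 0},
    if energyPos μ.1 = ⊤ then 0
    else Real.exp ((energyNeg μ.1).toReal - (energyPos μ.1).toReal)

/-- A Borel measure on `ℝ` is Hölder if `μ([x,y]) ≤ A |y - x|^η` for some `A, η > 0`. -/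
def HolderMeasure (μ : Measure ℝ) : Prop :=
  ∃ A η : ℝ, 0 < A ∧ 0 < η ∧
    ∀ x y : ℝ, x ≤ y → (μ (Set.Icc x y)).toReal ≤ A * (y - x) ^ η

/-- A compact finite union of intervals: a nonempty compact subset of `ℝ` with finitely
many connected components and no isolated points. -/
def IsCFUI (S : Set ℝ) : Prop :=
  IsCompact S ∧ S.Nonempty ∧
    {C : Set ℝ | ∃ x ∈ S, C = connectedComponentIn S x}.Finite ∧
    ∀ x ∈ S, AccPt x (𝓟 S)

/-- The `n`-norm `max_{x ∈ S} e^{n U^μ(x)} |P(x)|` of a complex polynomial with respect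
to `(μ, S)`. -/
noncomputable def nNorm (μ : Measure ℝ) (S : Set ℝ) (n : ℕ) (P : Polynomial ℂ) : ℝ :=
  ⨆ x : S, Real.exp ((n : ℝ) * potential μ x) * ‖P.eval ((x : ℝ) : ℂ)‖

/-- The counting measure `μ_P = (1/deg P) ∑ δ_root` of a complex polynomial. -/
noncomputable def rootMeasure (P : Polynomial ℂ) : Measure ℂ :=
  ((P.natDegree : ℝ≥0∞))⁻¹ • (P.roots.map (fun z => (Measure.dirac z : Measure ℂ))).sum

/-- Weak-* convergence of a sequence of measures on `ℂ`. -/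
def WeakStarTendstoC (ν : ℕ → Measure ℂ) (μ : Measure ℂ) : Prop :=
  ∀ f : ℂ → ℝ, Continuous f →
    Tendsto (fun k => ∫ z, f z ∂(ν k)) atTop (nhds (∫ z, f z ∂μ))

/-- Weak-* convergence of a sequence of measures on `ℝ`. -/
def WeakStarTendsto (ν : ℕ → Measure ℝ) (μ : Measure ℝ) : Prop :=
  ∀ f : ℝ → ℝ, Continuous f →
    Tendsto (fun k => ∫ x, f x ∂(ν k)) atTop (nhds (∫ x, f x ∂μ))

section Aux

open Polynomial

lemma aux_map_comp (p : Polynomial ℤ) :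
    p.map (Int.castRingHom ℂ) = (p.map (Int.castRingHom ℚ)).map (algebraMap ℚ ℂ) := by
  rw [Polynomial.map_map]
  congr 1

lemma aux_dvd (p Q : Polynomial ℤ) (hm : p.Monic) (hQ0 : Q ≠ 0)
    (h : (p.map (Int.castRingHom ℚ)) ∣ (Q.map (Int.castRingHom ℚ))) : p ∣ Q := by
  have hc : Q.content ≠ 0 := by simpa [Polynomial.content_eq_zero_iff] using hQ0
  rw [Q.eq_C_content_mul_primPart, Polynomial.map_mul, Polynomial.map_C] at h
  have hu : IsUnit (Polynomial.C ((Int.castRingHom ℚ) Q.content)) :=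
    Polynomial.isUnit_C.mpr (IsUnit.mk0 _ (by simpa using hc))
  have h2 : (p.map (Int.castRingHom ℚ)) ∣ (Q.primPart.map (Int.castRingHom ℚ)) :=
    (IsUnit.dvd_mul_left hu).mp h
  have h3 : p ∣ Q.primPart :=
    (hm.isPrimitive.dvd_iff_fraction_map_dvd_fraction_map (K := ℚ)
      ).mpr h2
  exact h3.trans (Q.primPart_dvd)

-- roots of p are not roots of Q
lemma aux_root_ne (p Q : Polynomial ℤ) (hm : p.Monic) (hi : Irreducible p) (hQ0 : Q ≠ 0)
    (hndvd : ¬ p ∣ Q) :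
    ∀ b ∈ (p.map (Int.castRingHom ℂ)).roots, Polynomial.aeval b Q ≠ 0 := by
  intro b hb hzero
  set pQ := p.map (Int.castRingHom ℚ) with hpQ
  have hpQi : Irreducible pQ := (Polynomial.IsPrimitive.Int.irreducible_iff_irreducible_map_cast hm.isPrimitive).mp hi
  have hcop : IsCoprime pQ (Q.map (Int.castRingHom ℚ)) :=
    (hpQi.coprime_iff_not_dvd).mpr (fun hd => hndvd (aux_dvd p Q hm hQ0 hd))
  obtain ⟨a, c, habc⟩ := hcop
  have := congrArg (Polynomial.eval b) (congrArg (Polynomial.map (algebraMap ℚ ℂ)) habc)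
  simp only [Polynomial.map_add, Polynomial.map_mul, Polynomial.eval_add, Polynomial.eval_mul,
    Polynomial.map_one, Polynomial.eval_one] at this
  have hpb : Polynomial.eval b (pQ.map (algebraMap ℚ ℂ)) = 0 := by
    rw [← aux_map_comp]
    exact (Polynomial.isRoot_of_mem_roots hb)
  have hQb : Polynomial.eval b ((Q.map (Int.castRingHom ℚ)).map (algebraMap ℚ ℂ)) = 0 := by
    rw [← aux_map_comp]
    simpa [Polynomial.aeval_def, Polynomial.eval_map] using hzero
  rw [hpb, hQb] at this
  simp at this

lemma aux_prod_int (p Q : Polynomial ℤ) (hm : p.Monic) (hi : Irreducible p) (hQ0 : Q ≠ 0)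
    (hndvd : ¬ p ∣ Q) :
    ∃ m : ℤ, m ≠ 0 ∧
      (((p.map (Int.castRingHom ℂ)).roots.map (fun b => Polynomial.aeval b Q)).prod) = (m : ℂ) := by
  set pQ := p.map (Int.castRingHom ℚ) with hpQdef
  have hpQm : pQ.Monic := hm.map _
  have hpQ0 : pQ ≠ 0 := hpQm.ne_zero
  have hpQi : Irreducible pQ :=
    (Polynomial.IsPrimitive.Int.irreducible_iff_irreducible_map_cast hm.isPrimitive).mp hi
  haveI : Fact (Irreducible pQ) := ⟨hpQi⟩
  set K := AdjoinRoot pQ with hKdef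
  set α : K := AdjoinRoot.root pQ with hαdef
  haveI : FiniteDimensional ℚ K := (AdjoinRoot.powerBasis hpQ0).finite
  set x : K := Polynomial.aeval α (Q.map (Int.castRingHom ℚ)) with hxdef
  have hx0 : x ≠ 0 := by
    erw [hxdef, AdjoinRoot.aeval_eq, Ne, AdjoinRoot.mk_eq_zero]
    intro hd
    exact hndvd (aux_dvd p Q hm hQ0 hd)
  have hαint : IsIntegral ℤ α := by
    refine ⟨p, hm, ?_⟩
    rw [← Polynomial.aeval_def]
    have : (Polynomial.aeval α) p = Polynomial.aeval α (p.map (algebraMap ℤ ℚ)) :=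
      (Polynomial.aeval_map_algebraMap ℚ α p).symm
    erw [this, algebraMap_int_eq, ← hpQdef, hαdef, AdjoinRoot.aeval_eq, AdjoinRoot.mk_self]
  have hxmem : x ∈ Algebra.adjoin ℤ ({α} : Set K) := by
    have hxQ : x = Polynomial.aeval α Q := by
      rw [hxdef, ← algebraMap_int_eq, Polynomial.aeval_map_algebraMap]
    rw [hxQ, Algebra.adjoin_singleton_eq_range_aeval]
    exact ⟨Q, rfl⟩
  have hxint : IsIntegral ℤ x :=
    IsIntegral.of_mem_of_fg _ hαint.fg_adjoin_singleton _ hxmem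
  have hNint : IsIntegral ℤ (Algebra.norm ℚ x) := Algebra.isIntegral_norm ℚ hxint
  obtain ⟨m, hmm⟩ := IsIntegrallyClosed.isIntegral_iff.mp hNint
  have hN0 : Algebra.norm ℚ x ≠ 0 := by
    rw [Algebra.norm_ne_zero_iff]
    exact hx0
  have hm0 : m ≠ 0 := by
    rintro rfl
    rw [map_zero] at hmm
    exact hN0 hmm.symm
  refine ⟨m, hm0, ?_⟩
  have hemb : (algebraMap ℚ ℂ) (Algebra.norm ℚ x) = ∏ σ : K →ₐ[ℚ] ℂ, σ x :=
    Algebra.norm_eq_prod_embeddings ℚ ℂ x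
  -- the equiv between embeddings and roots
  set e := AdjoinRoot.equiv ℂ ℚ pQ hpQ0 with hedef
  have heval : ∀ σ : K →ₐ[ℚ] ℂ, ((e σ : ℂ)) = σ α := fun _ => rfl
  set s := (pQ.map (algebraMap ℚ ℂ)).roots with hsdef
  have hsroots : (p.map (Int.castRingHom ℂ)).roots = s := by rw [hsdef, ← aux_map_comp]
  have hnodup : s.Nodup := Polynomial.nodup_roots (hpQi.separable.map)
  set g : ℂ → ℂ := fun b => Polynomial.aeval b (Q.map (Int.castRingHom ℚ)) with hgdef
  have hmem : ∀ σ : K →ₐ[ℚ] ℂ, σ α ∈ s := by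
    intro σ
    have := (e σ).2
    rwa [heval] at this
  have hbij : ∏ σ : K →ₐ[ℚ] ℂ, σ x = ∏ y ∈ s.toFinset, g y := by
    refine Finset.prod_bij (fun σ _ => σ α) ?_ ?_ ?_ ?_
    · intro σ _
      exact Multiset.mem_toFinset.mpr (hmem σ)
    · intro σ₁ _ σ₂ _ h
      have : e σ₁ = e σ₂ := Subtype.ext (by rw [heval, heval]; exact h)
      exact e.injective this
    · intro y hy
      refine ⟨e.symm ⟨y, Multiset.mem_toFinset.mp hy⟩, Finset.mem_univ _, ?_⟩
      have := heval (e.symm ⟨y, Multiset.mem_toFinset.mp hy⟩)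
      rw [e.apply_symm_apply] at this
      exact this.symm
    · intro σ _
      rw [hgdef]
      exact (Polynomial.aeval_algHom_apply σ α (Q.map (Int.castRingHom ℚ))).symm ▸
        (Polynomial.aeval_algHom_apply σ α (Q.map (Int.castRingHom ℚ))).symm
  have hfin : ∏ y ∈ s.toFinset, g y = (s.map g).prod := by
    rw [Finset.prod]
    congr 1
    rw [Multiset.toFinset_val, Multiset.dedup_eq_self.mpr hnodup]
  have hgf : (s.map g).prod = ((p.map (Int.castRingHom ℂ)).roots.map
      (fun b => Polynomial.aeval b Q)).prod := by
    rw [hsroots]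
    congr 1
    apply Multiset.map_congr rfl
    intro b _
    simp only [hgdef, ← algebraMap_int_eq]
    exact Polynomial.aeval_map_algebraMap ℚ b Q
  rw [← hgf, ← hfin, ← hbij, ← hemb, ← hmm]
  simp

lemma aux_log_multiset_prod (s : Multiset ℝ) (h : ∀ x ∈ s, x ≠ 0) :
    Real.log s.prod = (s.map Real.log).sum := by
  induction s using Multiset.induction_on with
  | empty => simp
  | cons a t ih =>
    have ha : a ≠ 0 := h a (Multiset.mem_cons_self a t)
    have ht : t.prod ≠ 0 :=
      Multiset.prod_ne_zero (fun h0 => h 0 (Multiset.mem_cons_of_mem h0) rfl)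
    rw [Multiset.prod_cons, Real.log_mul ha ht, Multiset.map_cons, Multiset.sum_cons,
      ih (fun x hx => h x (Multiset.mem_cons_of_mem hx))]

lemma aux_sum_log_nonneg (p Q : Polynomial ℤ) (hm : p.Monic) (hi : Irreducible p) (hQ0 : Q ≠ 0)
    (hndvd : ¬ p ∣ Q) :
    0 ≤ ((p.map (Int.castRingHom ℂ)).roots.map
      (fun b => Real.log (‖Polynomial.aeval b Q‖))).sum := by
  obtain ⟨m, hm0, hprod⟩ := aux_prod_int p Q hm hi hQ0 hndvd
  have hne := aux_root_ne p Q hm hi hQ0 hndvd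
  set s := (p.map (Int.castRingHom ℂ)).roots with hsdef
  have h1 : (s.map (fun b => Real.log (‖Polynomial.aeval b Q‖))).sum
      = Real.log ((s.map (fun b => ‖Polynomial.aeval b Q‖)).prod) := by
    rw [aux_log_multiset_prod _ (by
      intro y hy
      obtain ⟨b, hb, rfl⟩ := Multiset.mem_map.mp hy
      simpa using hne b hb), Multiset.map_map]
    rfl
  have h2 : (s.map (fun b => ‖Polynomial.aeval b Q‖)).prod
      = ‖(s.map (fun b => Polynomial.aeval b Q)).prod‖ := by
    rw [show ‖(s.map (fun b => Polynomial.aeval b Q)).prod‖ = (normHom : ℂ →*₀ ℝ) (s.map (fun b => Polynomial.aeval b Q)).prod from rfl, map_multiset_prod (normHom : ℂ →*₀ ℝ), Multiset.map_map]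
    rfl
  rw [h1, h2, hprod]
  have : (1 : ℝ) ≤ ‖(m : ℂ)‖ := by
    rw [Complex.norm_intCast]
    exact_mod_cast Int.one_le_abs hm0
  exact Real.log_nonneg this

lemma aux_ms_integrable_and (f : ℂ → ℝ) (hf : Measurable f) (s : Multiset ℂ) :
    Integrable f ((s.map (fun z => (Measure.dirac z : Measure ℂ))).sum) ∧
    ∫ z, f z ∂((s.map (fun z => (Measure.dirac z : Measure ℂ))).sum) = (s.map f).sum := by
  induction s using Multiset.induction_on with
  | empty => simp
  | cons a t ih =>
    have hint : Integrable f (Measure.dirac a) := by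
      refine ⟨hf.aestronglyMeasurable, ?_⟩
      rw [HasFiniteIntegral, lintegral_dirac' a (by measurability)]
      exact ENNReal.coe_lt_top
    rw [Multiset.map_cons, Multiset.sum_cons]
    refine ⟨(integrable_add_measure).mpr ⟨hint, ih.1⟩, ?_⟩
    rw [integral_add_measure hint ih.1, integral_dirac, Multiset.map_cons, Multiset.sum_cons, ih.2]

lemma aux_integral_rootMeasure (q : Polynomial ℂ) (f : ℂ → ℝ) (hf : Measurable f) :
    ∫ z, f z ∂(rootMeasure q) = (q.natDegree : ℝ)⁻¹ * (q.roots.map f).sum := by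
  rw [rootMeasure, integral_smul_measure, (aux_ms_integrable_and f hf q.roots).2]
  rw [ENNReal.toReal_inv, smul_eq_mul]
  norm_num

lemma aux_sum_le (s : Multiset ℂ) (f g : ℂ → ℝ) (h : ∀ x ∈ s, f x ≤ g x) :
    (s.map f).sum ≤ (s.map g).sum := by
  induction s using Multiset.induction_on with
  | empty => simp
  | cons a t ih =>
    simp only [Multiset.map_cons, Multiset.sum_cons]
    exact add_le_add (h a (Multiset.mem_cons_self a t))
      (ih (fun x hx => h x (Multiset.mem_cons_of_mem hx)))

lemma aux_log_max (a b : ℝ) (ha : 0 < a) (hb : 0 < b) :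
    Real.log (max a b) = max (Real.log a) (Real.log b) := by
  rcases le_total a b with h | h
  · rw [max_eq_right h, max_eq_right (Real.log_le_log ha h)]
  · rw [max_eq_left h, max_eq_left (Real.log_le_log hb h)]

lemma aux_bad_finite (P : ℕ → Polynomial ℤ) (hinj : Function.Injective P)
    (hmonic : ∀ k, (P k).Monic) (hirr : ∀ k, Irreducible (P k))
    (Q : Polynomial ℤ) (hQ0 : Q ≠ 0) : {k | P k ∣ Q}.Finite := by
  classical
  set A : Set (Polynomial ℤ) :=
    (↑(UniqueFactorizationMonoid.normalizedFactors Q).toFinset : Set (Polynomial ℤ)) ∪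
    (Neg.neg '' ↑(UniqueFactorizationMonoid.normalizedFactors Q).toFinset) with hA
  have hAfin : A.Finite :=
    (Set.Finite.union (Finset.finite_toSet _) ((Finset.finite_toSet _).image _))
  have hsub : {k | P k ∣ Q} ⊆ P ⁻¹' A := by
    intro k hk
    obtain ⟨f, hf, hassoc⟩ :=
      UniqueFactorizationMonoid.exists_mem_normalizedFactors_of_dvd hQ0 (hirr k) hk
    obtain ⟨u, hu⟩ := hassoc
    obtain ⟨r, hr, hCr⟩ := Polynomial.isUnit_iff.mp u.isUnit
    rcases Int.isUnit_iff.mp hr with rfl | rfl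
    · have : P k = f := by rw [← hu, ← hCr]; simp
      exact Or.inl (Multiset.mem_toFinset.mpr (by rw [this]; exact hf))
    · have : f = -(P k) := by rw [← hu, ← hCr]; ring_nf; simp [mul_comm]
      refine Or.inr ⟨f, Multiset.mem_toFinset.mpr hf, by rw [this]; ring⟩
  exact (hAfin.preimage (hinj.injOn)).subset hsub

end Aux

/-- **Theorem 1.6, (2) ⟹ (1) (Serre).**  Let `Σ ⊆ ℝ` be compact and let `μ` be a Borel
probability measure supported in `Σ`.  If there is an infinite sequence of distinct
irreducible monic integer polynomials whose counting measures are supported in `Σ` and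
weak-* converge to `μ`, then `∫ log|Q| dμ ≥ 0` for every nonzero integer polynomial
`Q`. -/
theorem integral_log_nonneg_of_tendsto
    (S : Set ℝ) (hS : IsCompact S)
    (μ : Measure ℂ) (hprob : IsProbabilityMeasure μ)
    (hsupp : μ ((Complex.ofReal '' S)ᶜ) = 0)
    (P : ℕ → Polynomial ℤ) (hinj : Function.Injective P)
    (hmonic : ∀ k, (P k).Monic) (hirr : ∀ k, Irreducible (P k))
    (hPsupp : ∀ k, rootMeasure ((P k).map (Int.castRingHom ℂ)) ((Complex.ofReal '' S)ᶜ) = 0)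
    (htend : WeakStarTendstoC (fun k => rootMeasure ((P k).map (Int.castRingHom ℂ))) μ) :
    ∀ Q : Polynomial ℤ, Q ≠ 0 →
      0 ≤ ∫ z, Real.log (‖Polynomial.aeval z Q‖) ∂μ := by
  intro Q hQ0
  classical
  set T : Set ℂ := Complex.ofReal '' S with hT
  set qC : Polynomial ℂ := Q.map (Int.castRingHom ℂ) with hqC
  have hcast : ∀ z : ℂ, Polynomial.aeval z Q = qC.eval z := by
    intro z
    rw [hqC, Polynomial.eval_map, Polynomial.aeval_def]
    rfl
  set g : ℂ → ℝ := fun z => Real.log (‖Polynomial.aeval z Q‖) with hg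
  have habsc : Continuous fun z : ℂ => ‖qC.eval z‖ :=
    continuous_norm.comp qC.continuous
  have hgmeas : Measurable g := by
    rw [hg]
    simp only [hcast]
    exact Real.measurable_log.comp habsc.measurable
  -- T is compact and nonempty
  have hTc : IsCompact T := hS.image Complex.continuous_ofReal
  have hTne : T.Nonempty := by
    by_contra h
    rw [Set.not_nonempty_iff_eq_empty] at h
    rw [h, Set.compl_empty, measure_univ] at hsupp
    exact one_ne_zero hsupp
  obtain ⟨z₀, hz₀T, hmax⟩ := hTc.exists_isMaxOn hTne habsc.continuousOn
  have hC : ∀ z ∈ T, ‖qC.eval z‖ ≤ ‖qC.eval z₀‖ := fun z hz => hmax hz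
  set B : ℝ := Real.log (max (‖qC.eval z₀‖) 1) with hB
  have hB0 : 0 ≤ B := Real.log_nonneg (le_max_right _ _)
  have hgB : ∀ z ∈ T, g z ≤ B := by
    intro z hz
    rw [hg]
    simp only [hcast]
    rcases eq_or_lt_of_le (norm_nonneg (qC.eval z)) with h0 | h0
    · rw [← h0, Real.log_zero]; exact hB0
    · exact Real.log_le_log h0 (le_trans (hC z hz) (le_max_left _ _))
  -- the truncations
  set F : ℕ → ℂ → ℝ := fun M z =>
    Real.log (max (‖qC.eval z‖) (Real.exp (-(M : ℝ)))) with hF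
  have hFpos : ∀ (M : ℕ) (z : ℂ), 0 < max (‖qC.eval z‖) (Real.exp (-(M : ℝ))) :=
    fun M z => lt_of_lt_of_le (Real.exp_pos _) (le_max_right _ _)
  have hFc : ∀ M, Continuous (F M) := by
    intro M
    exact (habsc.max continuous_const).log (fun z => (hFpos M z).ne')
  have hFB : ∀ (M : ℕ), ∀ z ∈ T, F M z ≤ B := by
    intro M z hz
    refine Real.log_le_log (hFpos M z) (max_le (le_trans (hC z hz) (le_max_left _ _)) ?_)
    have h1 : Real.exp (-(M : ℝ)) ≤ 1 := Real.exp_le_one_iff.mpr (neg_nonpos.mpr (Nat.cast_nonneg M))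
    exact le_trans h1 (le_max_right _ _)
  have hFlb : ∀ (M : ℕ) (z : ℂ), -(M : ℝ) ≤ F M z := by
    intro M z
    simp only [hF]
    have := Real.log_le_log (Real.exp_pos (-(M:ℝ)))
      (le_max_right (‖Polynomial.eval z qC‖) (Real.exp (-(M:ℝ))))
    rwa [Real.log_exp] at this
  -- a.e. membership in T
  have haeT : ∀ᵐ z ∂μ, z ∈ T := by
    have := measure_eq_zero_iff_ae_notMem.mp hsupp
    filter_upwards [this] with z hz
    simpa using hz
  -- key nonnegativity for truncations
  have hkey : ∀ M : ℕ, 0 ≤ ∫ z, F M z ∂μ := by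
    intro M
    refine ge_of_tendsto (htend (F M) (hFc M)) ?_
    have hbad := aux_bad_finite P hinj hmonic hirr Q hQ0
    have hev : ∀ᶠ k in atTop, ¬ P k ∣ Q := by
      rw [← Nat.cofinite_eq_atTop]
      exact hbad.eventually_cofinite_notMem
    filter_upwards [hev] with k hk
    rw [aux_integral_rootMeasure _ _ (hFc M).measurable]
    refine mul_nonneg (by positivity) ?_
    refine le_trans (aux_sum_log_nonneg (P k) Q (hmonic k) (hirr k) hQ0 hk) ?_
    refine aux_sum_le _ _ _ ?_
    intro b hb
    have hbne : Polynomial.aeval b Q ≠ 0 := aux_root_ne (P k) Q (hmonic k) (hirr k) hQ0 hk b hb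
    have hpos : 0 < ‖qC.eval b‖ := by
      rw [← hcast]
      simpa using hbne
    simp only [hF, hcast]
    exact Real.log_le_log hpos (le_max_left _ _)
  -- the zero set of Q is null
  set Z : Set ℂ := {z | qC.eval z = 0} with hZ
  have hZm : MeasurableSet Z := by
    have : Z = (fun z => qC.eval z) ⁻¹' {0} := by ext z; simp [hZ]
    rw [this]
    exact (isClosed_singleton.preimage qC.continuous).measurableSet
  have hFint : ∀ M : ℕ, Integrable (F M) μ := by
    intro M
    refine Integrable.mono' (integrable_const (max B (M : ℝ))) (hFc M).aestronglyMeasurable ?_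
    filter_upwards [haeT] with z hz
    rw [Real.norm_eq_abs, abs_le]
    constructor
    · linarith [hFlb M z, le_max_right B (M : ℝ)]
    · exact le_trans (hFB M z hz) (le_max_left _ _)
  have hZ0 : μ Z = 0 := by
    by_contra hne
    set c : ℝ := (μ Z).toReal with hc
    have hcpos : 0 < c := ENNReal.toReal_pos hne (measure_ne_top μ Z)
    obtain ⟨M, hM⟩ := exists_nat_gt (B / c)
    have hMc : B < (M : ℝ) * c := (div_lt_iff₀ hcpos).mp hM
    have hle : ∫ z, F M z ∂μ ≤ ∫ z, (Z.indicator (fun _ => -(M : ℝ) - B) z + B) ∂μ := by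
      refine integral_mono_ae (hFint M)
        (((integrable_const _).indicator hZm).add (integrable_const B)) ?_
      filter_upwards [haeT] with z hz
      by_cases hzZ : z ∈ Z
      · have : F M z = -(M : ℝ) := by
          simp only [hZ, Set.mem_setOf_eq] at hzZ
          simp only [hF]
          rw [show Polynomial.eval z qC = 0 from hzZ, norm_zero,
            max_eq_right (Real.exp_pos _).le, Real.log_exp]
        rw [this, Set.indicator_of_mem hzZ]
        ring_nf
        linarith
      · rw [Set.indicator_of_notMem hzZ, zero_add]
        exact hFB M z hz
    have heval : ∫ z, (Z.indicator (fun _ => -(M : ℝ) - B) z + B) ∂μ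
        = (-(M : ℝ) - B) * c + B := by
      rw [integral_add ((integrable_const _).indicator hZm) (integrable_const B),
        integral_indicator_const _ hZm, integral_const]
      simp [measure_univ, hc, Measure.real]
      ring
    have hcb : 0 ≤ B * c := mul_nonneg hB0 hcpos.le
    have := hkey M
    rw [heval] at hle
    nlinarith
  by_cases hint : Integrable g μ
  · have haeZ : ∀ᵐ z ∂μ, z ∉ Z := measure_eq_zero_iff_ae_notMem.mp hZ0
    have hconv2 : Tendsto (fun M : ℕ => ∫ z, F M z ∂μ) atTop (nhds (∫ z, g z ∂μ)) := by
      refine tendsto_integral_of_dominated_convergence (fun z => |g z|)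
        (fun M => (hFc M).aestronglyMeasurable) hint.abs ?_ ?_
      · intro M
        filter_upwards [haeZ] with z hz
        have hpos : 0 < ‖qC.eval z‖ := by
          rcases eq_or_lt_of_le (norm_nonneg (qC.eval z)) with h0 | h0
          · exact absurd (by simpa [hZ] using (norm_eq_zero.mp h0.symm)) hz
          · exact h0
        have hgz : g z = Real.log (‖qC.eval z‖) := by rw [hg]; simp only [hcast]
        have hFM : F M z = max (g z) (-(M : ℝ)) := by
          simp only [hF]
          rw [aux_log_max _ _ hpos (Real.exp_pos _), Real.log_exp, hgz]
        rw [hFM, Real.norm_eq_abs, abs_le]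
        constructor
        · exact le_trans (neg_abs_le _) (le_max_left _ _)
        · refine max_le (le_abs_self _) ?_
          rcases le_or_gt (g z) (-(M : ℝ)) with h | h
          · calc -(M:ℝ) ≤ -(g z) := by linarith
              _ ≤ |g z| := neg_le_abs _
          · exact le_trans h.le (le_abs_self _)
      · filter_upwards [haeZ] with z hz
        have hpos : 0 < ‖qC.eval z‖ := by
          rcases eq_or_lt_of_le (norm_nonneg (qC.eval z)) with h0 | h0
          · exact absurd (by simpa [hZ] using (norm_eq_zero.mp h0.symm)) hz
          · exact h0
        have hgz : g z = Real.log (‖qC.eval z‖) := by rw [hg]; simp only [hcast]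
        refine Filter.Tendsto.congr' ?_ tendsto_const_nhds
        filter_upwards [Filter.eventually_ge_atTop ⌈-(g z)⌉₊] with M hM
        have h1 : -(M : ℝ) ≤ g z := by
          have h2 : (-(g z)) ≤ (⌈-(g z)⌉₊ : ℝ) := Nat.le_ceil _
          have h3 : ((⌈-(g z)⌉₊ : ℕ) : ℝ) ≤ (M : ℝ) := Nat.cast_le.mpr hM
          linarith
        have : Real.exp (-(M : ℝ)) ≤ ‖Polynomial.eval z qC‖ := by
          calc Real.exp (-(M:ℝ)) ≤ Real.exp (g z) := Real.exp_le_exp.mpr h1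
            _ = ‖Polynomial.eval z qC‖ := by rw [hgz, Real.exp_log hpos]
        simp only [hF]
        rw [max_eq_left this, ← hgz]
    have := ge_of_tendsto hconv2 (Filter.Eventually.of_forall hkey)
    exact this
  · rw [integral_undef hint]
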